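/- Let n ≤ m, let B be an anti-symmetric quiver matrix on m vertex pairs, and let i : Fin n (viewed inside Fin m via the canonical embedding, so that the first n pairs are the mutable ones). Suppose there is no path through Sum.inl i. Let B̄ and B̄' denote the m × n shortened exchange matrices of B and of B' := μ_{Sum.inr i}(μ_{Sum.inl i}(B)) respectively, i.e. B̄ j k = B (Sum.inl j) (Sum.inl k) + B (Sum.inr j) (Sum.inl k) for j : Fin m and k : Fin n viewed in Fin m. Then the matrices obtained from B̄ and B̄' by casting entries into ℚ have equal rank. -/

import Mathlib

/-- Matrix mutation at an index `v`. -/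
def mutate {ι : Type*} [DecidableEq ι] (B : Matrix ι ι ℤ) (v : ι) : Matrix ι ι ℤ :=
  Matrix.of fun x y =>
    if x = v ∨ y = v then -B x y
    else B x y + (B x v).sign * max (B x v * B v y) 0

/-- Anti-symmetric quiver matrix on `n` vertex pairs. -/
def IsAntiSymQuiver {n : ℕ} (B : Matrix (Fin n ⊕ Fin n) (Fin n ⊕ Fin n) ℤ) : Prop :=
  (∀ x y, B x y = - B y x) ∧
  (∀ x y, B x y = B (Sum.swap y) (Sum.swap x)) ∧
  (∀ x, B x (Sum.swap x) = 0)

/-- The (square) shortened exchange matrix. -/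
def sbar {n : ℕ} (B : Matrix (Fin n ⊕ Fin n) (Fin n ⊕ Fin n) ℤ) : Fin n → Fin n → ℤ :=
  fun j k => B (Sum.inl j) (Sum.inl k) + B (Sum.inr j) (Sum.inl k)

/-- No path through the vertex `Sum.inl i`. -/
def NoPathThrough {n : ℕ} (B : Matrix (Fin n ⊕ Fin n) (Fin n ⊕ Fin n) ℤ) (i : Fin n) : Prop :=
  ∀ x, ¬ (0 < B x (Sum.inl i) ∧ 0 < B (Sum.inl i) (Sum.swap x))

/-- The `m × n` shortened exchange matrix, where the first `n` vertex pairs are mutable. -/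
def sbarRect {m n : ℕ} (h : n ≤ m) (B : Matrix (Fin m ⊕ Fin m) (Fin m ⊕ Fin m) ℤ) :
    Matrix (Fin m) (Fin n) ℤ :=
  Matrix.of fun j k =>
    B (Sum.inl j) (Sum.inl (Fin.castLE h k)) + B (Sum.inr j) (Sum.inl (Fin.castLE h k))

lemma sgnmax (x y : ℤ) : x.sign * max (x * y) 0 = max x 0 * y + x * max (-y) 0 := by
  rcases lt_trichotomy x 0 with hx | rfl | hx
  · rw [Int.sign_eq_neg_one_of_neg hx, max_eq_right hx.le]
    rcases le_or_gt y 0 with hy | hy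
    · rw [max_eq_left (by nlinarith : (0:ℤ) ≤ x * y),
        max_eq_left (neg_nonneg.2 hy)]
      ring
    · rw [max_eq_right (mul_nonpos_of_nonpos_of_nonneg hx.le hy.le),
        max_eq_right (neg_nonpos.2 hy.le)]
      ring
  · simp
  · rw [Int.sign_eq_one_of_pos hx, max_eq_left hx.le]
    rcases le_or_gt y 0 with hy | hy
    · rw [max_eq_right (mul_nonpos_of_nonneg_of_nonpos hx.le hy),
        max_eq_left (neg_nonneg.2 hy)]
      ring
    · rw [max_eq_left (mul_nonneg hx.le hy.le), max_eq_right (neg_nonpos.2 hy.le)]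
      ring

lemma key (a b c d : ℤ) (h1 : ¬(0 < a ∧ 0 < b)) (h2 : ¬(b < 0 ∧ a < 0))
    (h3 : ¬(c < 0 ∧ 0 < d)) (h4 : ¬(d < 0 ∧ 0 < c)) :
    a.sign * max (a * c) 0 + b.sign * max (b * (-d)) 0 +
      (-b).sign * max ((-b) * c) 0 + (-a).sign * max ((-a) * (-d)) 0
    = max (a - b) 0 * (c - d) + (a - b) * (if c < 0 ∨ d < 0 then -(c - d) else 0) := by
  rw [sgnmax, sgnmax, sgnmax, sgnmax]
  have h5 : max a 0 + max (-b) 0 = max (a - b) 0 := by omega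
  have h6 : max b 0 + max (-a) 0 = max (b - a) 0 := by omega
  have h7 : max (a - b) 0 - max (b - a) 0 = a - b := by omega
  split_ifs with hcd
  · have hc : c ≤ 0 := by omega
    have hd : d ≤ 0 := by omega
    have e1 : max (-c) 0 = -c := by omega
    have e2 : max (- -d) 0 = 0 := by omega
    rw [e1, e2]
    linear_combination c * h5 - d * h6 + d * h7
  · have hc : 0 ≤ c := by omega
    have hd : 0 ≤ d := by omega
    have e1 : max (-c) 0 = 0 := by omega
    have e2 : max (- -d) 0 = d := by omega
    rw [e1, e2]
    linear_combination c * h5 - d * h6 + d * h7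

lemma one_add_vecMulVec_mul {m' n' : Type*} [Fintype m'] [DecidableEq m'] [Fintype n']
    (u : m' → ℚ) (i0 : m') (A : Matrix m' n' ℚ) :
    (1 + Matrix.vecMulVec u (fun l => if l = i0 then 1 else 0)) * A
      = A + Matrix.of (fun j k => u j * A i0 k) := by
  ext j k
  rw [Matrix.add_mul, Matrix.one_mul]
  simp only [Matrix.add_apply, Matrix.of_apply, add_right_inj]
  rw [Matrix.mul_apply, Finset.sum_eq_single i0
    (fun l _ hl => by simp [Matrix.vecMulVec_apply, hl])
    (fun hmem => absurd (Finset.mem_univ i0) hmem)]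
  simp [Matrix.vecMulVec_apply]

lemma mul_one_add_vecMulVec {m' n' : Type*} [Fintype m'] [Fintype n'] [DecidableEq n']
    (z : n' → ℚ) (i0 : n') (A : Matrix m' n' ℚ) :
    A * (1 + Matrix.vecMulVec (fun l => if l = i0 then 1 else 0) z)
      = A + Matrix.of (fun j k => A j i0 * z k) := by
  ext j k
  rw [Matrix.mul_add, Matrix.mul_one]
  simp only [Matrix.add_apply, Matrix.of_apply, add_right_inj]
  rw [Matrix.mul_apply, Finset.sum_eq_single i0
    (fun l _ hl => by simp [Matrix.vecMulVec_apply, hl])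
    (fun hmem => absurd (Finset.mem_univ i0) hmem)]
  simp [Matrix.vecMulVec_apply]

theorem stmt2 {m n : ℕ} (h : n ≤ m) (B : Matrix (Fin m ⊕ Fin m) (Fin m ⊕ Fin m) ℤ)
    (hB : IsAntiSymQuiver B) (i : Fin n)
    (hpath : NoPathThrough B (Fin.castLE h i)) :
    ((sbarRect h B).map (Int.cast : ℤ → ℚ)).rank =
      ((sbarRect h
          (mutate (mutate B (Sum.inl (Fin.castLE h i))) (Sum.inr (Fin.castLE h i)))).map
        (Int.cast : ℤ → ℚ)).rank := by
  obtain ⟨hskew, hsym, hzero⟩ := hB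
  set ii : Fin m := Fin.castLE h i with hii
  set S : Matrix (Fin m) (Fin n) ℤ := sbarRect h B with hS
  set B' : Matrix (Fin m ⊕ Fin m) (Fin m ⊕ Fin m) ℤ :=
    mutate (mutate B (Sum.inl ii)) (Sum.inr ii) with hB'
  -- basic zero facts
  have hvv : B (Sum.inl ii) (Sum.inl ii) = 0 := by
    have := hskew (Sum.inl ii) (Sum.inl ii); omega
  have hvw : B (Sum.inl ii) (Sum.inr ii) = 0 := by
    have := hzero (Sum.inl ii); simpa using this
  have hwv : B (Sum.inr ii) (Sum.inl ii) = 0 := by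
    have := hskew (Sum.inr ii) (Sum.inl ii); omega
  have hSii : S ii i = 0 := by
    simp [hS, sbarRect, ← hii, hvv, hwv]
  -- vectors
  set tI : Fin m → ℤ := fun j => S j i with htI
  set sI : Fin n → ℤ := fun k => S ii k with hsI
  set wI : Fin m → ℤ := fun j => if j = ii then -2 else max (tI j) 0 with hwI
  set zI : Fin n → ℤ := fun k =>
    if k = i then -2
    else if B (Sum.inl ii) (Sum.inl (Fin.castLE h k)) < 0 ∨
            B (Sum.inl ii) (Sum.inr (Fin.castLE h k)) < 0 then -(sI k) else 0 with hzI
  have hCB : ∀ x y : Fin m ⊕ Fin m,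
      mutate B (Sum.inl ii) x y =
        if x = Sum.inl ii ∨ y = Sum.inl ii then -B x y
        else B x y + (B x (Sum.inl ii)).sign * max (B x (Sum.inl ii) * B (Sum.inl ii) y) 0 :=
    fun _ _ => rfl
  have hB'app : ∀ x y : Fin m ⊕ Fin m,
      B' x y =
        if x = Sum.inr ii ∨ y = Sum.inr ii then -(mutate B (Sum.inl ii)) x y
        else (mutate B (Sum.inl ii)) x y +
          ((mutate B (Sum.inl ii)) x (Sum.inr ii)).sign *
            max ((mutate B (Sum.inl ii)) x (Sum.inr ii) * (mutate B (Sum.inl ii)) (Sum.inr ii) y) 0 :=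
    fun _ _ => rfl
  -- entries of C at the special row/column
  have hCxw : ∀ x : Fin m ⊕ Fin m, x ≠ Sum.inl ii →
      mutate B (Sum.inl ii) x (Sum.inr ii) = B x (Sum.inr ii) := by
    intro x hx
    rw [hCB, if_neg (by simp [hx]), hvw]
    simp
  have hCwy : ∀ y : Fin m ⊕ Fin m, y ≠ Sum.inl ii →
      mutate B (Sum.inl ii) (Sum.inr ii) y = B (Sum.inr ii) y := by
    intro y hy
    rw [hCB, if_neg (by simp [hy]), hwv]
    simp
  -- the generic entry of B'
  have hB'gen : ∀ x y : Fin m ⊕ Fin m, x ≠ Sum.inl ii → x ≠ Sum.inr ii →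
      y ≠ Sum.inl ii → y ≠ Sum.inr ii →
      B' x y = B x y + (B x (Sum.inl ii)).sign * max (B x (Sum.inl ii) * B (Sum.inl ii) y) 0
        + (B x (Sum.inr ii)).sign * max (B x (Sum.inr ii) * B (Sum.inr ii) y) 0 := by
    intro x y hxv hxw hyv hyw
    rw [hB'app, if_neg (by simp [hxw, hyw]), hCxw x hxv, hCwy y hyv,
      hCB, if_neg (by simp [hxv, hyv])]
  -- special entries of B'
  have hCvv : mutate B (Sum.inl ii) (Sum.inl ii) (Sum.inl ii) = 0 := by
    rw [hCB, if_pos (Or.inl rfl), hvv]; simp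
  have hCvw : mutate B (Sum.inl ii) (Sum.inl ii) (Sum.inr ii) = 0 := by
    rw [hCB, if_pos (Or.inl rfl), hvw]; simp
  have hCwv : mutate B (Sum.inl ii) (Sum.inr ii) (Sum.inl ii) = 0 := by
    rw [hCB, if_pos (Or.inr rfl), hwv]; simp
  have hB'vv : B' (Sum.inl ii) (Sum.inl ii) = 0 := by
    rw [hB'app, if_neg (by simp), hCvv, hCvw]
    simp
  have hB'wv : B' (Sum.inr ii) (Sum.inl ii) = 0 := by
    rw [hB'app, if_pos (Or.inl rfl), hCwv]
    simp
  have hB'vy : ∀ y : Fin m ⊕ Fin m, y ≠ Sum.inl ii → y ≠ Sum.inr ii →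
      B' (Sum.inl ii) y = -B (Sum.inl ii) y := by
    intro y hyv hyw
    rw [hB'app, if_neg (by simp [hyw]), hCvw, hCB, if_pos (Or.inl rfl)]
    simp
  have hB'wy : ∀ y : Fin m ⊕ Fin m, y ≠ Sum.inl ii → y ≠ Sum.inr ii →
      B' (Sum.inr ii) y = -B (Sum.inr ii) y := by
    intro y hyv hyw
    rw [hB'app, if_pos (Or.inl rfl), hCwy y hyv]
  have hB'xv : ∀ x : Fin m ⊕ Fin m, x ≠ Sum.inl ii → x ≠ Sum.inr ii →
      B' x (Sum.inl ii) = -B x (Sum.inl ii) := by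
    intro x hxv hxw
    rw [hB'app, if_neg (by simp [hxw]), hCwv, hCB, if_pos (Or.inr rfl)]
    simp
  -- the master entrywise identity over ℤ
  have master : ∀ (j : Fin m) (k : Fin n),
      sbarRect h B' j k = S j k + wI j * sI k + tI j * zI k := by
    intro j k
    by_cases hj : j = ii
    · subst hj
      by_cases hk : k = i
      · rw [hk]
        have h0 : sbarRect h B' ii i = 0 := by
          simp only [sbarRect, Matrix.of_apply]
          rw [show Fin.castLE h i = ii from rfl, hB'vv, hB'wv]
          ring
        rw [h0]
        simp only [hwI, hzI, if_pos rfl]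
        rw [show tI ii = S ii i from rfl, show sI i = S ii i from rfl, hSii]
        ring
      · have hkv : (Sum.inl (Fin.castLE h k) : Fin m ⊕ Fin m) ≠ Sum.inl ii := by
          simp only [ne_eq, Sum.inl.injEq]
          exact fun hc => hk (Fin.castLE_injective h hc)
        have hkw : (Sum.inl (Fin.castLE h k) : Fin m ⊕ Fin m) ≠ Sum.inr ii := by simp
        have h0 : sbarRect h B' ii k = -S ii k := by
          simp only [sbarRect, Matrix.of_apply]
          rw [hB'vy _ hkv hkw, hB'wy _ hkv hkw, hS]
          simp only [sbarRect, Matrix.of_apply]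
          ring
        rw [h0]
        simp only [hwI, hzI, if_pos rfl]
        rw [show tI ii = S ii i from rfl, hSii, show sI k = S ii k from rfl]
        ring
    · have hjlv : (Sum.inl j : Fin m ⊕ Fin m) ≠ Sum.inl ii := by simp [hj]
      have hjlw : (Sum.inl j : Fin m ⊕ Fin m) ≠ Sum.inr ii := by simp
      have hjrv : (Sum.inr j : Fin m ⊕ Fin m) ≠ Sum.inl ii := by simp
      have hjrw : (Sum.inr j : Fin m ⊕ Fin m) ≠ Sum.inr ii := by simp [hj]
      by_cases hk : k = i
      · rw [hk]
        have h0 : sbarRect h B' j i = -S j i := by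
          simp only [sbarRect, Matrix.of_apply]
          rw [show Fin.castLE h i = ii from rfl, hB'xv _ hjlv hjlw, hB'xv _ hjrv hjrw, hS]
          simp only [sbarRect, Matrix.of_apply]
          ring
        rw [h0]
        simp only [hwI, hzI, if_neg hj, if_pos rfl]
        rw [show sI i = S ii i from rfl, hSii, show tI j = S j i from rfl]
        ring
      · -- the generic case
        have hkv : (Sum.inl (Fin.castLE h k) : Fin m ⊕ Fin m) ≠ Sum.inl ii := by
          simp only [ne_eq, Sum.inl.injEq]
          exact fun hc => hk (Fin.castLE_injective h hc)
        have hkw : (Sum.inl (Fin.castLE h k) : Fin m ⊕ Fin m) ≠ Sum.inr ii := by simp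
        set a : ℤ := B (Sum.inl j) (Sum.inl ii) with ha
        set b : ℤ := B (Sum.inl j) (Sum.inr ii) with hb
        set c : ℤ := B (Sum.inl ii) (Sum.inl (Fin.castLE h k)) with hc
        set d : ℤ := B (Sum.inl ii) (Sum.inr (Fin.castLE h k)) with hd
        -- structural identities
        have hb' : b = B (Sum.inl ii) (Sum.inr j) := by
          rw [hb, hsym (Sum.inl j) (Sum.inr ii)]; rfl
        have haw : B (Sum.inr j) (Sum.inr ii) = -a := by
          have h1 : B (Sum.inr j) (Sum.inr ii) = B (Sum.inl ii) (Sum.inl j) := by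
            rw [hsym (Sum.inr j) (Sum.inr ii)]; rfl
          rw [h1, ha, hskew (Sum.inl ii) (Sum.inl j)]
        have hbv : B (Sum.inr j) (Sum.inl ii) = -b := by
          rw [hskew (Sum.inr j) (Sum.inl ii), ← hb']
        have hdw : B (Sum.inr ii) (Sum.inl (Fin.castLE h k)) = -d := by
          have h1 : B (Sum.inr ii) (Sum.inl (Fin.castLE h k))
              = B (Sum.inr (Fin.castLE h k)) (Sum.inl ii) := by
            rw [hsym (Sum.inr ii) (Sum.inl (Fin.castLE h k))]; rfl
          rw [h1, hskew (Sum.inr (Fin.castLE h k)) (Sum.inl ii), ← hd]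
        -- no-path constraints
        have np1 : ¬(0 < a ∧ 0 < b) := by
          have np := hpath (Sum.inl j)
          simp only [Sum.swap_inl] at np
          rw [← ha, ← hb'] at np
          exact np
        have np2 : ¬(b < 0 ∧ a < 0) := by
          have := hpath (Sum.inr j)
          simp only [Sum.swap_inr] at this
          rw [hbv] at this
          have h1 : B (Sum.inl ii) (Sum.inl j) = -a := by rw [ha, hskew (Sum.inl ii) (Sum.inl j)]
          rw [h1] at this
          omega
        have np3 : ¬(c < 0 ∧ 0 < d) := by
          have := hpath (Sum.inl (Fin.castLE h k))
          simp only [Sum.swap_inl] at this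
          have h1 : B (Sum.inl (Fin.castLE h k)) (Sum.inl ii) = -c := by
            rw [hc, hskew (Sum.inl (Fin.castLE h k)) (Sum.inl ii)]
          rw [h1, ← hd] at this
          omega
        have np4 : ¬(d < 0 ∧ 0 < c) := by
          have := hpath (Sum.inr (Fin.castLE h k))
          simp only [Sum.swap_inr] at this
          have h1 : B (Sum.inr (Fin.castLE h k)) (Sum.inl ii) = -d := by
            have h2 : B (Sum.inr (Fin.castLE h k)) (Sum.inl ii)
                = B (Sum.inr ii) (Sum.inl (Fin.castLE h k)) := by
              rw [hsym (Sum.inr (Fin.castLE h k)) (Sum.inl ii)]; rfl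
            rw [h2, hdw]
          rw [h1, ← hc] at this
          omega
        have hts : tI j = a - b := by
          simp only [htI, hS, sbarRect, Matrix.of_apply]
          rw [show Fin.castLE h i = ii from rfl, ← ha, hbv]
          ring
        have hsk : sI k = c - d := by
          simp only [hsI, hS, sbarRect, Matrix.of_apply]
          rw [← hc, hdw]
          ring
        have lhs1 : sbarRect h B' j k =
            S j k + (a.sign * max (a * c) 0 + b.sign * max (b * (-d)) 0 +
              (-b).sign * max ((-b) * c) 0 + (-a).sign * max ((-a) * (-d)) 0) := by
          simp only [sbarRect, Matrix.of_apply]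
          rw [hB'gen _ _ hjlv hjlw hkv hkw, hB'gen _ _ hjrv hjrw hkv hkw,
            ← ha, ← hb, ← hc, hbv, haw, hdw]
          simp only [hS, sbarRect, Matrix.of_apply]
          ring
        rw [lhs1, key a b c d np1 np2 np3 np4]
        simp only [hwI, hzI]
        rw [if_neg hj, if_neg hk, hts, hsk, ← hc, ← hd]
        split_ifs with hcd <;> ring
  -- now the rank argument over ℚ
  set A : Matrix (Fin m) (Fin n) ℚ := (sbarRect h B).map (Int.cast : ℤ → ℚ) with hA
  set E : Matrix (Fin m) (Fin m) ℚ :=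
    1 + Matrix.vecMulVec (fun j => (wI j : ℚ)) (fun l => if l = ii then 1 else 0) with hE
  set F : Matrix (Fin n) (Fin n) ℚ :=
    1 + Matrix.vecMulVec (fun l => if l = i then 1 else 0) (fun k => (zI k : ℚ)) with hF
  have hAii : A ii i = 0 := by
    simp only [hA, Matrix.map_apply]
    rw [show sbarRect h B ii i = S ii i from rfl, hSii]
    simp
  have hEAF : (sbarRect h B').map (Int.cast : ℤ → ℚ) = E * A * F := by
    rw [hE, one_add_vecMulVec_mul, hF, mul_one_add_vecMulVec]
    ext j k
    simp only [Matrix.add_apply, Matrix.of_apply, Matrix.map_apply]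
    rw [hAii]
    have hAji : A j i = ((tI j : ℤ) : ℚ) := by
      simp only [hA, Matrix.map_apply]
      rfl
    have hAik : A ii k = ((sI k : ℤ) : ℚ) := by
      simp only [hA, Matrix.map_apply]
      rfl
    rw [hAji, hAik, master j k]
    push_cast
    simp only [hA, Matrix.map_apply]
    push_cast
    ring
  have hEE : E * E = 1 := by
    rw [hE, one_add_vecMulVec_mul]
    have hwii : wI ii = -2 := by simp [hwI]
    ext j l
    simp only [Matrix.add_apply, Matrix.of_apply, Matrix.one_apply, Matrix.vecMulVec_apply,
      hwii]
    by_cases hl : l = ii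
    · subst hl
      push_cast
      ring
    · have h1 : (if l = ii then (1:ℚ) else 0) = 0 := if_neg hl
      have h2 : (if ii = l then (1:ℚ) else 0) = 0 := if_neg (fun hc => hl hc.symm)
      rw [h1, h2]
      ring
  have hFF : F * F = 1 := by
    rw [hF, mul_one_add_vecMulVec]
    have hzi : zI i = -2 := by simp [hzI]
    ext j k
    simp only [Matrix.add_apply, Matrix.of_apply, Matrix.one_apply, Matrix.vecMulVec_apply]
    by_cases hj : j = i
    · rw [if_pos hj, hzi]
      push_cast
      ring
    · rw [if_neg hj]
      ring
  have hEdet : IsUnit E.det := (Matrix.isUnit_iff_isUnit_det E).mp ⟨⟨E, E, hEE, hEE⟩, rfl⟩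
  have hFdet : IsUnit F.det := (Matrix.isUnit_iff_isUnit_det F).mp ⟨⟨F, F, hFF, hFF⟩, rfl⟩
  rw [hEAF, Matrix.rank_mul_eq_left_of_isUnit_det F (E * A) hFdet,
    Matrix.rank_mul_eq_right_of_isUnit_det E A hEdet]
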